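/- Let y be a nondegenerate L² map from D to ℝ^d. Then there is a unique polar factorization y = Y ∘ X, where Y belongs to the class C of maps with convex potential and X is a Lebesgue-measure-preserving map of D; in this decomposition Y coincides (almost everywhere) with the unique rearrangement y* of y in the class C. -/

import Mathlib

open MeasureTheory Set

noncomputable section

/-- `D` is the closure of a bounded connected open set in `ℝ^d`, its boundary is
Lebesgue-negligible, and it has Lebesgue measure `1`. -/
def IsNiceDomain {d : ℕ} (D : Set (EuclideanSpace ℝ (Fin d))) : Prop :=
  (∃ U : Set (EuclideanSpace ℝ (Fin d)),
      IsOpen U ∧ IsConnected U ∧ Bornology.IsBounded U ∧ D = closure U) ∧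
  volume (frontier D) = 0 ∧ volume D = 1

/-- The map `y` belongs to the class `C` of maps with a convex potential. -/
def HasConvexPotential {d : ℕ} (D : Set (EuclideanSpace ℝ (Fin d)))
    (y : EuclideanSpace ℝ (Fin d) → EuclideanSpace ℝ (Fin d)) : Prop :=
  ∃ p : EuclideanSpace ℝ (Fin d) → EReal,
    LowerSemicontinuous p ∧
    (∀ x z : EuclideanSpace ℝ (Fin d), ∀ t : ℝ, 0 ≤ t → t ≤ 1 →
      p (t • x + (1 - t) • z) ≤ (t : EReal) * p x + ((1 - t : ℝ) : EReal) * p z) ∧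
    (∀ᵐ x ∂(volume.restrict D), ∃ f : EuclideanSpace ℝ (Fin d) → ℝ,
      (∀ᶠ z in nhds x, p z = (f z : EReal)) ∧ HasGradientAt f (y x) x)

/-- `y` is nondegenerate: preimages of Lebesgue-negligible sets are negligible (in `D`). -/
def Nondegenerate {d : ℕ} (D : Set (EuclideanSpace ℝ (Fin d)))
    (y : EuclideanSpace ℝ (Fin d) → EuclideanSpace ℝ (Fin d)) : Prop :=
  ∀ N : Set (EuclideanSpace ℝ (Fin d)), volume N = 0 → volume (y ⁻¹' N ∩ D) = 0

/-- A (Borel) Lebesgue-measure-preserving map of `D`. -/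
def MeasurePreservingMapOf {d : ℕ} (D : Set (EuclideanSpace ℝ (Fin d)))
    (X : EuclideanSpace ℝ (Fin d) → EuclideanSpace ℝ (Fin d)) : Prop :=
  Measurable X ∧ MapsTo X D D ∧
    Measure.map X (volume.restrict D) = volume.restrict D


open Filter
open scoped RealInnerProductSpace Topology

section PolarFactorizationAux

variable {d : ℕ}
local notation "E" => EuclideanSpace ℝ (Fin d)

/-- The Fenchel conjugate of an `EReal`-valued function, with the supremum restricted to
points where the function takes real values. -/
def erealConj (p : EuclideanSpace ℝ (Fin d) → EReal) (b : EuclideanSpace ℝ (Fin d)) : EReal :=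
  ⨆ (z : EuclideanSpace ℝ (Fin d)) (c : ℝ) (_ : p z = (c : EReal)), ((⟪z, b⟫ - c : ℝ) : EReal)

lemma erealConj_ge {p : E → EReal} {z : E} {c : ℝ} (h : p z = (c : EReal)) (b : E) :
    ((⟪z, b⟫ - c : ℝ) : EReal) ≤ erealConj p b := by
  refine le_trans ?_ (le_iSup _ z)
  refine le_trans ?_ (le_iSup _ c)
  exact le_iSup (fun _ : p z = (c : EReal) => ((⟪z, b⟫ - c : ℝ) : EReal)) h

lemma erealConj_le {p : E → EReal} {b : E} {v : EReal}
    (h : ∀ z : E, ∀ c : ℝ, p z = (c : EReal) → ((⟪z, b⟫ - c : ℝ) : EReal) ≤ v) :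
    erealConj p b ≤ v :=
  iSup_le fun z => iSup_le fun c => iSup_le fun hz => h z c hz

lemma erealConj_lowerSemicontinuous (p : E → EReal) : LowerSemicontinuous (erealConj p) := by
  refine lowerSemicontinuous_iSup fun z => lowerSemicontinuous_iSup fun c =>
    lowerSemicontinuous_iSup fun _ => ?_
  exact (continuous_coe_real_ereal.comp ((continuous_const.inner continuous_id).sub
    continuous_const)).lowerSemicontinuous

lemma erealConj_measurable (p : E → EReal) : Measurable (erealConj p) :=
  (erealConj_lowerSemicontinuous p).measurable

/-- Fenchel equality at points of differentiability. -/
lemma erealConj_fenchel_eq {p : E → EReal}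
    (hsub : ∀ z : E, ∀ c : ℝ, p z = (c : EReal) → fa + ⟪g, z - a⟫ ≤ c)
    (hpa : p a = (fa : EReal)) :
    erealConj p g = ((⟪a, g⟫ - fa : ℝ) : EReal) := by
  refine le_antisymm (erealConj_le fun z c hz => ?_) (erealConj_ge hpa g)
  rw [EReal.coe_le_coe_iff]
  have h := hsub z c hz
  have h2 : ⟪g, z - a⟫ = ⟪g, z⟫ - ⟪g, a⟫ := inner_sub_right g z a
  rw [real_inner_comm g z, real_inner_comm g a]
  linarith

/-- Uniqueness of the subgradient at a point of differentiability. -/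
lemma subgradient_unique {F : E → ℝ} {x g v : E} (hgrad : HasGradientAt F g x)
    (hsub : ∀ᶠ z in 𝓝 x, F x + ⟪v, z - x⟫ ≤ F z) : v = g := by
  have hmin : IsLocalMin (fun z => F z - ⟪v, z⟫) x := by
    filter_upwards [hsub] with z hz
    have h2 : ⟪v, z - x⟫ = ⟪v, z⟫ - ⟪v, x⟫ := inner_sub_right v z x
    simp only [ge_iff_le]; linarith
  have hinner : HasFDerivAt (fun z : E => ⟪v, z⟫) ((InnerProductSpace.toDual ℝ _) v) x :=
    (InnerProductSpace.toDual ℝ _ v).hasFDerivAt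
  have hh : HasFDerivAt (fun z => F z - ⟪v, z⟫)
      ((InnerProductSpace.toDual ℝ _) g - (InnerProductSpace.toDual ℝ _) v) x :=
    hgrad.hasFDerivAt.sub hinner
  have h0 := hmin.hasFDerivAt_eq_zero hh
  have : (InnerProductSpace.toDual ℝ _) v = (InnerProductSpace.toDual ℝ _) g := by
    rw [sub_eq_zero] at h0; exact h0.symm
  exact (InnerProductSpace.toDual ℝ _).injective this

/-- Convexity inequality for the conjugate. -/
lemma erealConj_convex_combo {p : E → EReal} {b₁ b₂ : E} {v₁ v₂ t : ℝ}
    (h₁ : erealConj p b₁ ≤ (v₁ : EReal)) (h₂ : erealConj p b₂ ≤ (v₂ : EReal))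
    (ht0 : 0 ≤ t) (ht1 : t ≤ 1) :
    erealConj p (t • b₁ + (1 - t) • b₂) ≤ ((t * v₁ + (1 - t) * v₂ : ℝ) : EReal) := by
  refine erealConj_le fun z c hz => ?_
  have e₁ : ⟪z, b₁⟫ - c ≤ v₁ := EReal.coe_le_coe_iff.1 ((erealConj_ge hz b₁).trans h₁)
  have e₂ : ⟪z, b₂⟫ - c ≤ v₂ := EReal.coe_le_coe_iff.1 ((erealConj_ge hz b₂).trans h₂)
  rw [EReal.coe_le_coe_iff]
  have hc : ⟪z, t • b₁ + (1 - t) • b₂⟫ = t * ⟪z, b₁⟫ + (1 - t) * ⟪z, b₂⟫ := by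
    rw [inner_add_right, real_inner_smul_right, real_inner_smul_right]
  nlinarith [mul_le_mul_of_nonneg_left e₁ ht0, mul_le_mul_of_nonneg_left e₂ (by linarith : (0:ℝ) ≤ 1 - t)]

/-- A convex `EReal`-valued function which is locally a real function with gradient `g` at `a`
satisfies the global subgradient inequality at `a`. -/
lemma global_subgradient {p : E → EReal}
    (hconv : ∀ x z : E, ∀ t : ℝ, 0 ≤ t → t ≤ 1 →
      p (t • x + (1 - t) • z) ≤ (t : EReal) * p x + ((1 - t : ℝ) : EReal) * p z)
    {a g : E} {f : E → ℝ} (hloc : ∀ᶠ z in 𝓝 a, p z = (f z : EReal))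
    (hgrad : HasGradientAt f g a) :
    ∀ z : E, ∀ c : ℝ, p z = (c : EReal) → f a + ⟪g, z - a⟫ ≤ c := by
  intro z c hz
  have hpa : p a = (f a : EReal) := hloc.self_of_nhds
  -- the line `t ↦ a + t • (z - a)`
  have hline : Tendsto (fun t : ℝ => a + t • (z - a)) (𝓝 0) (𝓝 a) := by
    have : Continuous (fun t : ℝ => a + t • (z - a)) := by fun_prop
    simpa using this.tendsto 0
  have hev : ∀ᶠ t : ℝ in 𝓝 0, p (a + t • (z - a)) = (f (a + t • (z - a)) : EReal) :=
    hline.eventually hloc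
  -- derivative of `φ t = f (a + t • (z - a))` at `0` is `⟪g, z - a⟫`
  have hder : HasDerivAt (fun t : ℝ => f (a + t • (z - a))) ⟪g, z - a⟫ 0 := by
    have hl : HasDerivAt (fun t : ℝ => a + t • (z - a)) (z - a) 0 := by
      simpa using ((hasDerivAt_id (0 : ℝ)).smul_const (z - a)).const_add a
    have hg' : HasFDerivAt f ((InnerProductSpace.toDual ℝ _) g) (a + (0:ℝ) • (z - a)) := by
      simpa using hgrad.hasFDerivAt
    have := hg'.comp_hasDerivAt 0 hl
    simpa [InnerProductSpace.toDual_apply_apply, Function.comp_def] using this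
  have hslope : Tendsto (slope (fun t : ℝ => f (a + t • (z - a))) 0) (𝓝[>] 0)
      (𝓝 ⟪g, z - a⟫) :=
    (hasDerivAt_iff_tendsto_slope.1 hder).mono_left
      (nhdsWithin_mono 0 fun t ht => ne_of_gt ht)
  have key : ⟪g, z - a⟫ ≤ c - f a := by
    refine le_of_tendsto hslope ?_
    have h1 : ∀ᶠ t : ℝ in 𝓝 0, t < 1 := eventually_lt_nhds (by norm_num)
    filter_upwards [eventually_nhdsWithin_of_eventually_nhds hev,
      eventually_nhdsWithin_of_eventually_nhds h1, self_mem_nhdsWithin] with t hpt ht1 ht0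
    have ht0' : (0 : ℝ) < t := ht0
    -- convexity inequality
    have hc := hconv z a t (le_of_lt ht0') (le_of_lt ht1)
    rw [hz, hpa] at hc
    have hpoint : t • z + (1 - t) • a = a + t • (z - a) := by
      rw [smul_sub, sub_smul, one_smul]; abel
    rw [hpoint, hpt, ← EReal.coe_mul, ← EReal.coe_mul, ← EReal.coe_add,
      EReal.coe_le_coe_iff] at hc
    have hφ0 : f (a + (0 : ℝ) • (z - a)) = f a := by simp
    rw [slope_def_field]
    simp only [sub_zero, hφ0]
    rw [div_le_iff₀ ht0']
    nlinarith
  linarith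

/-- The a.e. inverse of a map with convex potential, obtained as the gradient of
the Fenchel conjugate of its potential. -/
theorem exists_inverse {D : Set (EuclideanSpace ℝ (Fin d))} (hDvol : volume D = 1)
    {w : E → E} (hw : Measurable w) (hwC : HasConvexPotential D w)
    (hac : Measure.map w (volume.restrict D) ≪ volume) :
    ∃ G : E → E, Measurable G ∧ ∀ᵐ a ∂(volume.restrict D), G (w a) = a := by
  obtain ⟨p, hlsc, hconv, hae⟩ := hwC
  set lD := volume.restrict D with hlD
  set μ := Measure.map w lD with hμ
  have hlDuniv : lD univ = 1 := by
    rw [hlD, Measure.restrict_apply_univ]; exact hDvol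
  have hlDne : lD ≠ 0 := by
    intro h; rw [h] at hlDuniv; simp at hlDuniv
  have : (MeasureTheory.ae lD).NeBot := ae_neBot.2 hlDne
  -- a witness "good point"
  obtain ⟨a₁, f₁, hloc₁, hgrad₁⟩ := hae.exists
  set q := erealConj p with hq
  set Q := fun b : E => (q b).toReal with hQ
  have hqmeas : Measurable q := (erealConj_lowerSemicontinuous p).measurable
  have hQmeas : Measurable Q := measurable_ereal_toReal.comp hqmeas
  have hqbot : ∀ b : E, q b ≠ ⊥ := by
    intro b h
    have h2 := erealConj_ge hloc₁.self_of_nhds b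
    rw [← hq, h, le_bot_iff] at h2
    exact EReal.coe_ne_bot _ h2
  set dq := {b : E | q b ≠ ⊤} with hdq
  have hdqmeas : MeasurableSet dq := (hqmeas (measurableSet_singleton ⊤)).compl
  have hqreal : ∀ b ∈ dq, q b = ((Q b : ℝ) : EReal) := fun b hb =>
    (EReal.coe_toReal hb (hqbot b)).symm
  have hdqconv : Convex ℝ dq := by
    intro b₁ h₁ b₂ h₂ s t hs ht hst
    have hts : t = 1 - s := by linarith
    subst hts
    have hcb := erealConj_convex_combo (p := p) (hqreal b₁ h₁).le (hqreal b₂ h₂).le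
      hs (by linarith)
    rw [← hq] at hcb
    intro htop
    change q (s • b₁ + (1 - s) • b₂) = ⊤ at htop
    rw [htop, top_le_iff] at hcb
    exact EReal.coe_ne_top _ hcb
  set O := interior dq with hO
  have hOopen : IsOpen O := isOpen_interior
  have hOsub : O ⊆ dq := interior_subset
  have hQconv : ConvexOn ℝ O Q := by
    refine ⟨hdqconv.interior, ?_⟩
    intro b₁ h₁ b₂ h₂ s t hs ht hst
    have hts : t = 1 - s := by linarith
    subst hts
    have hcb := erealConj_convex_combo (p := p) (hqreal b₁ (hOsub h₁)).le
      (hqreal b₂ (hOsub h₂)).le hs (by linarith)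
    rw [← hq] at hcb
    have hmem : s • b₁ + (1 - s) • b₂ ∈ dq :=
      hdqconv (hOsub h₁) (hOsub h₂) hs (by linarith) (by ring)
    have := EReal.toReal_le_toReal hcb (hqbot _) (EReal.coe_ne_top _)
    rw [EReal.toReal_coe] at this; exact this
  have hlip : LocallyLipschitzOn O Q := hQconv.locallyLipschitzOn hOopen
  set Diff := {b : E | DifferentiableAt ℝ Q b} with hDiff
  have hDiffmeas : MeasurableSet Diff := measurableSet_of_differentiableAt ℝ Q
  have hOdiff : volume (O \ Diff) = 0 := by
    refine measure_null_of_locally_null _ fun x hx => ?_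
    obtain ⟨K, t, ht, hKt⟩ := hlip hx.1
    rw [hOopen.nhdsWithin_eq hx.1] at ht
    have htO : t ∩ O ∈ 𝓝 x := Filter.inter_mem ht (hOopen.mem_nhds hx.1)
    obtain ⟨r, hr, hball⟩ := Metric.mem_nhds_iff.1 htO
    have hlipball : LipschitzOnWith K Q (Metric.ball x r) :=
      hKt.mono fun β hβ => (hball hβ).1
    obtain ⟨g, hg, heq⟩ := hlipball.extend_real
    have hgdiff : ∀ᵐ β ∂(volume : Measure E), DifferentiableAt ℝ g β :=
      hg.ae_differentiableAt
    refine ⟨Metric.ball x r \ Diff, ?_, ?_⟩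
    · exact mem_nhdsWithin.2 ⟨Metric.ball x r, Metric.isOpen_ball,
        Metric.mem_ball_self hr, fun β hβ => ⟨hβ.1, hβ.2.2⟩⟩
    · have hsub : Metric.ball x r \ Diff ⊆ {β : E | ¬ DifferentiableAt ℝ g β} := by
        intro β hβ hgb
        refine hβ.2 ?_
        have heq' : g =ᶠ[𝓝 β] Q := by
          filter_upwards [Metric.isOpen_ball.mem_nhds hβ.1] with γ hγ
          exact (heq hγ).symm
        exact hDiff ▸ (heq'.differentiableAt_iff.1 hgb)
      refine measure_mono_null hsub ?_
      rw [← ae_iff] at *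
      exact hgdiff
  set G := fun b : E => gradient Q b with hG
  have hGmeas : Measurable G := by
    have hGeq : G = fun b => (InnerProductSpace.toDual ℝ _).symm (fderiv ℝ Q b) := rfl
    rw [hGeq]
    exact (InnerProductSpace.toDual ℝ _).symm.continuous.measurable.comp
      (measurable_fderiv ℝ Q)
  set T := {b : E | q b = ⊤} with hT
  have hTmeas : MeasurableSet T := hqmeas (measurableSet_singleton ⊤)
  have haeT : ∀ᵐ a ∂lD, q (w a) ≠ ⊤ := by
    filter_upwards [hae] with a ha
    obtain ⟨f, hloc, hgrad⟩ := ha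
    have hfen := erealConj_fenchel_eq (global_subgradient hconv hloc hgrad)
      hloc.self_of_nhds
    rw [← hq] at hfen
    rw [hfen]
    exact EReal.coe_ne_top _
  have hμT : μ T = 0 := by
    rw [hμ, Measure.map_apply hw hTmeas]
    have : w ⁻¹' T = {a : E | q (w a) = ⊤} := rfl
    rw [this]
    have h0 := ae_iff.1 haeT
    simpa using h0
  have hfront : μ (frontier dq) = 0 := hac (hdqconv.addHaar_frontier volume)
  have hODiff : μ (O \ Diff) = 0 := hac hOdiff
  have hgoodset : ∀ᵐ b ∂μ, b ∈ O ∧ DifferentiableAt ℝ Q b := by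
    have hbad : μ (T ∪ frontier dq ∪ (O \ Diff)) = 0 :=
      measure_union_null (measure_union_null hμT hfront) hODiff
    rw [ae_iff]
    refine measure_mono_null ?_ hbad
    intro b hb
    simp only [mem_setOf_eq, not_and] at hb
    by_cases hbO : b ∈ O
    · exact Or.inr ⟨hbO, fun hd => hb hbO hd⟩
    · by_cases hbT : q b = ⊤
      · exact Or.inl (Or.inl hbT)
      · refine Or.inl (Or.inr ?_)
        have : b ∈ dq \ frontier dq → b ∈ interior dq := by
          rw [← self_diff_frontier dq]; exact fun h => h
        by_contra hfr
        exact hbO (hO ▸ this ⟨hbT, hfr⟩)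
  have hgoodpull : ∀ᵐ a ∂lD, w a ∈ O ∧ DifferentiableAt ℝ Q (w a) := by
    have hmeaset : MeasurableSet {b : E | b ∈ O ∧ DifferentiableAt ℝ Q b} :=
      hOopen.measurableSet.inter hDiffmeas
    rw [hμ] at hgoodset
    exact (ae_map_iff hw.aemeasurable hmeaset).1 hgoodset
  refine ⟨G, hGmeas, ?_⟩
  filter_upwards [hae, hgoodpull] with a hfa hgood
  obtain ⟨f, hloc, hgrad⟩ := hfa
  obtain ⟨hbO, hbdiff⟩ := hgood
  have hsubgr := global_subgradient hconv hloc hgrad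
  have hfen : q (w a) = ((⟪a, w a⟫ - f a : ℝ) : EReal) := by
    rw [hq]; exact erealConj_fenchel_eq hsubgr hloc.self_of_nhds
  have hQb : Q (w a) = ⟪a, w a⟫ - f a := by
    rw [hQ]; simp only [hfen, EReal.toReal_coe]
  have hsubloc : ∀ᶠ β in 𝓝 (w a), Q (w a) + ⟪a, β - w a⟫ ≤ Q β := by
    filter_upwards [hOopen.mem_nhds hbO] with β hβ
    have h1 : ((⟪a, β⟫ - f a : ℝ) : EReal) ≤ q β := by
      rw [hq]; exact erealConj_ge hloc.self_of_nhds β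
    have h2 : ⟪a, β⟫ - f a ≤ Q β := by
      have h4 := EReal.toReal_le_toReal h1 (EReal.coe_ne_bot _) (hOsub hβ)
      rw [EReal.toReal_coe] at h4
      exact h4
    have h3 : ⟪a, β - w a⟫ = ⟪a, β⟫ - ⟪a, w a⟫ := inner_sub_right a β (w a)
    rw [hQb]; linarith
  have hQgrad : HasGradientAt Q (G (w a)) (w a) := hbdiff.hasGradientAt
  exact (subgradient_unique hQgrad hsubloc).symm

theorem fenchel_pair {D : Set (EuclideanSpace ℝ (Fin d))} (hDvol : volume D = 1)
    {w u : E → E} (hw : Measurable w) (hu : Measurable u)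
    (hwC : HasConvexPotential D w)
    (hmap : Measure.map w (volume.restrict D) = Measure.map u (volume.restrict D)) :
    ∃ P S : E → ℝ, Measurable P ∧ Measurable S ∧
      (∀ᵐ a ∂(volume.restrict D), P a + S (w a) = ⟪a, w a⟫) ∧
      (∀ᵐ a ∂(volume.restrict D), ⟪a, u a⟫ ≤ P a + S (u a)) ∧
      (∃ g₀ : E, ∃ α : ℝ, ∀ᵐ a ∂(volume.restrict D), α + ⟪g₀, a⟫ ≤ P a) ∧
      (∃ x₀ : E, ∃ β : ℝ, (∀ᵐ a ∂(volume.restrict D), β + ⟪x₀, w a⟫ ≤ S (w a)) ∧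
        (∀ᵐ a ∂(volume.restrict D), β + ⟪x₀, u a⟫ ≤ S (u a))) ∧
      (∀ᵐ a ∂(volume.restrict D), P a + S (u a) = ⟪a, u a⟫ → w a = u a) := by
  obtain ⟨p, hlsc, hconv, hae⟩ := hwC
  set lD := volume.restrict D with hlD
  have hlDuniv : lD univ = 1 := by rw [hlD, Measure.restrict_apply_univ]; exact hDvol
  have hlDne : lD ≠ 0 := by intro h; rw [h] at hlDuniv; simp at hlDuniv
  have : (MeasureTheory.ae lD).NeBot := ae_neBot.2 hlDne
  obtain ⟨x₀, f₀, hloc₀, hgrad₀⟩ := hae.exists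
  set q := erealConj p with hq
  set P := fun a : E => (p a).toReal with hP
  set S := fun b : E => (q b).toReal with hS
  have hpm : Measurable p := hlsc.measurable
  have hqm : Measurable q := (erealConj_lowerSemicontinuous p).measurable
  have hPm : Measurable P := measurable_ereal_toReal.comp hpm
  have hSm : Measurable S := measurable_ereal_toReal.comp hqm
  have hqbot : ∀ b : E, q b ≠ ⊥ := by
    intro b h
    have h2 := erealConj_ge hloc₀.self_of_nhds b
    rw [← hq, h, le_bot_iff] at h2
    exact EReal.coe_ne_bot _ h2
  have hsub₀ := global_subgradient hconv hloc₀ hgrad₀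
  -- basic a.e. facts along `w`
  have hkey : ∀ᵐ a ∂lD, p a = ((P a : ℝ) : EReal) ∧ P a + S (w a) = ⟪a, w a⟫ ∧
      q (w a) ≠ ⊤ := by
    filter_upwards [hae] with a ha
    obtain ⟨f, hloc, hgrad⟩ := ha
    have hpa : p a = ((f a : ℝ) : EReal) := hloc.self_of_nhds
    have hPa : P a = f a := by rw [hP]; simp [hpa]
    have hfen : q (w a) = ((⟪a, w a⟫ - f a : ℝ) : EReal) := by
      rw [hq]; exact erealConj_fenchel_eq (global_subgradient hconv hloc hgrad) hpa
    refine ⟨by rw [hPa]; exact hpa, ?_, by rw [hfen]; exact EReal.coe_ne_top _⟩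
    have hSwa : S (w a) = ⟪a, w a⟫ - f a := by
      show (q (w a)).toReal = _
      rw [hfen, EReal.toReal_coe]
    rw [hPa, hSwa]; ring
  -- `q` is a.e. finite along `u` as well
  have hT : MeasurableSet {b : E | q b = ⊤} := hqm (measurableSet_singleton ⊤)
  have hqtop_u : ∀ᵐ a ∂lD, q (u a) ≠ ⊤ := by
    have h1 : lD (w ⁻¹' {b : E | q b = ⊤}) = 0 := by
      have := (hkey.mono fun a ha => ha.2.2)
      have h2 := ae_iff.1 this
      simpa using h2
    have h2 : Measure.map u lD {b : E | q b = ⊤} = 0 := by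
      rw [← hmap, Measure.map_apply hw hT]; exact h1
    rw [Measure.map_apply hu hT] at h2
    have h3 : ∀ᵐ a ∂lD, ¬ (u a ∈ {b : E | q b = ⊤}) := by
      rw [ae_iff]; simpa using h2
    filter_upwards [h3] with a ha using ha
  refine ⟨P, S, hPm, hSm, hkey.mono fun a ha => ha.2.1, ?_, ?_, ?_, ?_⟩
  · -- Fenchel–Young along `u`
    filter_upwards [hkey, hqtop_u] with a ⟨hpa, _, _⟩ htop
    have h1 : ((⟪a, u a⟫ - P a : ℝ) : EReal) ≤ q (u a) := by
      rw [hq]; exact erealConj_ge hpa (u a)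
    have h2 := EReal.toReal_le_toReal h1 (EReal.coe_ne_bot _) htop
    rw [EReal.toReal_coe] at h2
    have : S (u a) = (q (u a)).toReal := rfl
    linarith [h2]
  · -- affine lower bound for P
    refine ⟨w x₀, f₀ x₀ - ⟪w x₀, x₀⟫, ?_⟩
    filter_upwards [hkey] with a ⟨hpa, _, _⟩
    have := hsub₀ a (P a) hpa
    have h3 : ⟪w x₀, a - x₀⟫ = ⟪w x₀, a⟫ - ⟪w x₀, x₀⟫ := inner_sub_right (w x₀) a x₀
    linarith
  · -- affine lower bound for S along both maps
    have hpx₀ : p x₀ = ((f₀ x₀ : ℝ) : EReal) := hloc₀.self_of_nhds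
    have hgen : ∀ b : E, q b ≠ ⊤ → (- f₀ x₀) + ⟪x₀, b⟫ ≤ S b := by
      intro b htop
      have h1 : ((⟪x₀, b⟫ - f₀ x₀ : ℝ) : EReal) ≤ q b := by
        rw [hq]; exact erealConj_ge hpx₀ b
      have h2 := EReal.toReal_le_toReal h1 (EReal.coe_ne_bot _) htop
      rw [EReal.toReal_coe] at h2
      have : S b = (q b).toReal := rfl
      linarith
    exact ⟨x₀, - f₀ x₀, (hkey.mono fun a ha => hgen _ ha.2.2),
      hqtop_u.mono fun a ha => hgen _ ha⟩
  · -- extraction of a.e. equality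
    filter_upwards [hae, hkey, hqtop_u] with a hgood ⟨hpa, _, _⟩ htop
    intro heq
    obtain ⟨f, hloc, hgrad⟩ := hgood
    have hPa : P a = f a := by
      have : p a = ((f a : ℝ) : EReal) := hloc.self_of_nhds
      rw [hP]; simp [this]
    -- `q (u a)` is real and equals `⟪a, u a⟫ - P a`
    have hquar : q (u a) = ((⟪a, u a⟫ - P a : ℝ) : EReal) := by
      have hqreal : q (u a) = ((S (u a) : ℝ) : EReal) := (EReal.coe_toReal htop (hqbot _)).symm
      rw [hqreal]
      congr 1
      linarith
    -- global subgradient of `p` at `a` with slope `u a`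
    have hsubu : ∀ z : E, ∀ c : ℝ, p z = ((c : ℝ) : EReal) → f a + ⟪u a, z - a⟫ ≤ c := by
      intro z c hz
      have h1 : ((⟪z, u a⟫ - c : ℝ) : EReal) ≤ q (u a) := by
        rw [hq]; exact erealConj_ge hz (u a)
      rw [hquar, EReal.coe_le_coe_iff, hPa] at h1
      have h4 : ⟪z, u a⟫ = ⟪u a, z⟫ := real_inner_comm (u a) z
      have h5 : ⟪a, u a⟫ = ⟪u a, a⟫ := real_inner_comm (u a) a
      have h6 : ⟪u a, z - a⟫ = ⟪u a, z⟫ - ⟪u a, a⟫ := inner_sub_right (u a) z a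
      linarith
    have hev : ∀ᶠ z in 𝓝 a, f a + ⟪u a, z - a⟫ ≤ f z := by
      filter_upwards [hloc] with z hz using hsubu z (f z) hz
    exact (subgradient_unique hgrad hev).symm

lemma integrable_of_bounds {μ : Measure E} {f ℓ u : E → ℝ}
    (hm : AEStronglyMeasurable f μ) (hℓ : Integrable ℓ μ) (hu : Integrable u μ)
    (h₁ : ∀ᵐ a ∂μ, ℓ a ≤ f a) (h₂ : ∀ᵐ a ∂μ, f a ≤ u a) : Integrable f μ := by
  refine Integrable.mono' (hℓ.abs.add hu.abs) hm ?_
  filter_upwards [h₁, h₂] with a ha1 ha2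
  rw [Real.norm_eq_abs, abs_le]
  simp only [Pi.add_apply]
  constructor
  · have n1 := neg_abs_le (ℓ a); have n2 := abs_nonneg (u a); linarith
  · have n1 := le_abs_self (u a); have n2 := abs_nonneg (ℓ a); linarith

theorem rearrangement_unique {D : Set (EuclideanSpace ℝ (Fin d))}
    (hDvol : volume D = 1) (hDbd : Bornology.IsBounded D) (hDmeas : MeasurableSet D)
    {w₁ w₂ : E → E} (h1m : Measurable w₁) (h2m : Measurable w₂)
    (hC1 : HasConvexPotential D w₁) (hC2 : HasConvexPotential D w₂)
    (hmap : Measure.map w₁ (volume.restrict D) = Measure.map w₂ (volume.restrict D))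
    (hL1 : Integrable w₁ (volume.restrict D)) :
    w₁ =ᵐ[volume.restrict D] w₂ := by
  set lD := volume.restrict D with hlD
  haveI : IsFiniteMeasure lD := ⟨by
    rw [hlD, Measure.restrict_apply_univ, hDvol]; exact ENNReal.one_lt_top⟩
  -- `w₂` is also integrable
  have hL1' : Integrable w₂ lD := by
    have h1 : Integrable id (Measure.map w₁ lD) := by
      rw [integrable_map_measure aestronglyMeasurable_id h1m.aemeasurable]
      exact hL1
    rw [hmap, integrable_map_measure aestronglyMeasurable_id h2m.aemeasurable] at h1
    exact h1
  obtain ⟨R, hR⟩ := Bornology.IsBounded.exists_pos_norm_le hDbd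
  have haeD : ∀ᵐ a ∂lD, a ∈ D := ae_restrict_mem hDmeas
  -- inner products are integrable
  have hinner : ∀ v : E → E, Measurable v → Integrable v lD →
      Integrable (fun a => ⟪a, v a⟫) lD := by
    intro v hvm hv
    refine Integrable.mono' (hv.norm.const_mul R) (measurable_id.inner hvm).aestronglyMeasurable ?_
    filter_upwards [haeD] with a ha
    calc ‖⟪a, v a⟫‖ ≤ ‖a‖ * ‖v a‖ := norm_inner_le_norm a (v a)
    _ ≤ R * ‖v a‖ := by
      have h1 := hR.2 a ha
      have := norm_nonneg (v a); nlinarith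
  have hconst : ∀ x₀ : E, ∀ v : E → E, Measurable v → Integrable v lD →
      Integrable (fun a => ⟪x₀, v a⟫) lD := by
    intro x₀ v hvm hv
    refine Integrable.mono' (hv.norm.const_mul ‖x₀‖) (measurable_const.inner hvm).aestronglyMeasurable ?_
    refine Eventually.of_forall fun a => ?_
    exact norm_inner_le_norm x₀ (v a)
  have hin1 : Integrable (fun a => ⟪a, w₁ a⟫) lD := hinner w₁ h1m hL1
  have hin2 : Integrable (fun a => ⟪a, w₂ a⟫) lD := hinner w₂ h2m hL1'
  -- Fenchel packages for both potentials
  obtain ⟨P₁, S₁, hP₁m, hS₁m, he₁, hi₁, ⟨g₁, α₁, hαP₁⟩, ⟨x₁, β₁, hβS₁w, hβS₁u⟩, hext₁⟩ :=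
    fenchel_pair hDvol h1m h2m hC1 hmap
  obtain ⟨P₂, S₂, hP₂m, hS₂m, he₂, hi₂, ⟨g₂, α₂, hαP₂⟩, ⟨x₂, β₂, hβS₂w, hβS₂u⟩, hext₂⟩ :=
    fenchel_pair hDvol h2m h1m hC2 hmap.symm
  -- integrability of all pieces
  have hid : Integrable (fun a : E => a) lD := by
    refine Integrable.mono' (integrable_const R) aestronglyMeasurable_id ?_
    filter_upwards [haeD] with a ha using hR.2 a ha
  have haff : ∀ g₀ : E, ∀ α : ℝ, Integrable (fun a => α + ⟪g₀, a⟫) lD := by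
    intro g₀ α
    exact (integrable_const α).add (hconst g₀ (fun a => a) measurable_id hid)
  have hIntP₁ : Integrable P₁ lD := by
    refine integrable_of_bounds hP₁m.aestronglyMeasurable (haff g₁ α₁)
      ((hin1.sub (hconst x₁ w₁ h1m hL1)).sub (integrable_const β₁)) hαP₁ ?_
    filter_upwards [he₁, hβS₁w] with a hea hba
    simp only [Pi.sub_apply]; linarith
  have hIntP₂ : Integrable P₂ lD := by
    refine integrable_of_bounds hP₂m.aestronglyMeasurable (haff g₂ α₂)
      ((hin2.sub (hconst x₂ w₂ h2m hL1')).sub (integrable_const β₂)) hαP₂ ?_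
    filter_upwards [he₂, hβS₂w] with a hea hba
    simp only [Pi.sub_apply]; linarith
  have hIntS₁w₁ : Integrable (fun a => S₁ (w₁ a)) lD := by
    refine (hin1.sub hIntP₁).congr ?_
    filter_upwards [he₁] with a hea
    simp only [Pi.sub_apply]; linarith
  have hIntS₂w₂ : Integrable (fun a => S₂ (w₂ a)) lD := by
    refine (hin2.sub hIntP₂).congr ?_
    filter_upwards [he₂] with a hea
    simp only [Pi.sub_apply]; linarith
  have hIntS₁w₂ : Integrable (fun a => S₁ (w₂ a)) lD := by
    have h1 : Integrable S₁ (Measure.map w₁ lD) := by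
      rw [integrable_map_measure hS₁m.aestronglyMeasurable h1m.aemeasurable]
      exact hIntS₁w₁
    rw [hmap, integrable_map_measure hS₁m.aestronglyMeasurable h2m.aemeasurable] at h1
    exact h1
  have hIntS₂w₁ : Integrable (fun a => S₂ (w₁ a)) lD := by
    have h1 : Integrable S₂ (Measure.map w₂ lD) := by
      rw [integrable_map_measure hS₂m.aestronglyMeasurable h2m.aemeasurable]
      exact hIntS₂w₂
    rw [← hmap, integrable_map_measure hS₂m.aestronglyMeasurable h1m.aemeasurable] at h1
    exact h1
  have hS₁int_eq : ∫ a, S₁ (w₂ a) ∂lD = ∫ a, S₁ (w₁ a) ∂lD := by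
    have h1 : ∫ b, S₁ b ∂(Measure.map w₁ lD) = ∫ a, S₁ (w₁ a) ∂lD :=
      integral_map h1m.aemeasurable hS₁m.aestronglyMeasurable
    have h2 : ∫ b, S₁ b ∂(Measure.map w₂ lD) = ∫ a, S₁ (w₂ a) ∂lD :=
      integral_map h2m.aemeasurable hS₁m.aestronglyMeasurable
    rw [← h1, ← h2, hmap]
  have hS₂int_eq : ∫ a, S₂ (w₁ a) ∂lD = ∫ a, S₂ (w₂ a) ∂lD := by
    have h1 : ∫ b, S₂ b ∂(Measure.map w₁ lD) = ∫ a, S₂ (w₁ a) ∂lD :=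
      integral_map h1m.aemeasurable hS₂m.aestronglyMeasurable
    have h2 : ∫ b, S₂ b ∂(Measure.map w₂ lD) = ∫ a, S₂ (w₂ a) ∂lD :=
      integral_map h2m.aemeasurable hS₂m.aestronglyMeasurable
    rw [← h1, ← h2, hmap]
  -- the two transport costs agree
  have hB_eq : ∫ a, (P₂ a + S₂ (w₁ a)) ∂lD = ∫ a, ⟪a, w₂ a⟫ ∂lD := by
    rw [integral_add hIntP₂ hIntS₂w₁, hS₂int_eq, ← integral_add hIntP₂ hIntS₂w₂]
    exact integral_congr_ae (he₂.mono fun a h => h)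
  have hA_eq : ∫ a, (P₁ a + S₁ (w₂ a)) ∂lD = ∫ a, ⟪a, w₁ a⟫ ∂lD := by
    rw [integral_add hIntP₁ hIntS₁w₂, hS₁int_eq, ← integral_add hIntP₁ hIntS₁w₁]
    exact integral_congr_ae (he₁.mono fun a h => h)
  have hA_le : ∫ a, ⟪a, w₁ a⟫ ∂lD ≤ ∫ a, (P₂ a + S₂ (w₁ a)) ∂lD :=
    integral_mono_ae hin1 (hIntP₂.add hIntS₂w₁) hi₂
  have hB_le : ∫ a, ⟪a, w₂ a⟫ ∂lD ≤ ∫ a, (P₁ a + S₁ (w₂ a)) ∂lD :=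
    integral_mono_ae hin2 (hIntP₁.add hIntS₁w₂) hi₁
  have hAB : ∫ a, (P₂ a + S₂ (w₁ a)) ∂lD = ∫ a, ⟪a, w₁ a⟫ ∂lD := by
    rw [hB_eq]; rw [hB_eq] at hA_le
    linarith [hA_eq ▸ hB_le]
  -- conclude pointwise a.e. equality in Fenchel–Young, hence `w₁ = w₂` a.e.
  have hnn : 0 ≤ᵐ[lD] fun a => P₂ a + S₂ (w₁ a) - ⟪a, w₁ a⟫ := by
    filter_upwards [hi₂] with a ha; simp only [Pi.zero_apply]; linarith
  have hInth : Integrable (fun a => P₂ a + S₂ (w₁ a) - ⟪a, w₁ a⟫) lD :=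
    (hIntP₂.add hIntS₂w₁).sub hin1
  have hsum : Integrable (fun a => P₂ a + S₂ (w₁ a)) lD := hIntP₂.add hIntS₂w₁
  have hzero : ∫ a, (P₂ a + S₂ (w₁ a) - ⟪a, w₁ a⟫) ∂lD = 0 := by
    rw [integral_sub hsum hin1, hAB, sub_self]
  have hae0 := (integral_eq_zero_iff_of_nonneg_ae hnn hInth).1 hzero
  filter_upwards [hae0, hext₂] with a h0 hx
  have : P₂ a + S₂ (w₁ a) = ⟪a, w₁ a⟫ := by
    have h0' : P₂ a + S₂ (w₁ a) - ⟪a, w₁ a⟫ = 0 := h0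
    linarith
  exact (hx this).symm

end PolarFactorizationAux

/-- **Polar factorization of maps (Brenier).**
A nondegenerate `L²` map `y : D → ℝ^d` admits a factorization `y = Y ∘ X` with `Y` in the
class `C` of maps with convex potential and `X` a Lebesgue-measure-preserving map of `D`;
this factorization is unique up to a.e. equality, and `Y` coincides a.e. with the unique
rearrangement `y*` of `y` in the class `C`. -/
theorem polar_factorization
    {d : ℕ} (D : Set (EuclideanSpace ℝ (Fin d))) (hD : IsNiceDomain D)
    (y : EuclideanSpace ℝ (Fin d) → EuclideanSpace ℝ (Fin d))
    (hy : Measurable y) (hyL2 : MemLp y 2 (volume.restrict D))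
    (hynd : Nondegenerate D y)
    -- `ys = y*` : the unique rearrangement of `y` in the class `C`
    (ys : EuclideanSpace ℝ (Fin d) → EuclideanSpace ℝ (Fin d))
    (hysm : Measurable ys) (hysC : HasConvexPotential D ys)
    (hysr : Measure.map ys (volume.restrict D) = Measure.map y (volume.restrict D)) :
    ∃ Y X : EuclideanSpace ℝ (Fin d) → EuclideanSpace ℝ (Fin d),
      Measurable Y ∧ HasConvexPotential D Y ∧ MeasurePreservingMapOf D X ∧
      (∀ᵐ a ∂(volume.restrict D), y a = Y (X a)) ∧
      -- `Y` coincides a.e. with `y*`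
      Y =ᵐ[volume.restrict D] ys ∧
      -- uniqueness of the polar factorization
      (∀ Y' X' : EuclideanSpace ℝ (Fin d) → EuclideanSpace ℝ (Fin d),
        Measurable Y' → HasConvexPotential D Y' → MeasurePreservingMapOf D X' →
        (∀ᵐ a ∂(volume.restrict D), y a = Y' (X' a)) →
        Y' =ᵐ[volume.restrict D] Y ∧ X' =ᵐ[volume.restrict D] X) := by
  classical
  set lD := volume.restrict D with hlD
  obtain ⟨⟨U, hUo, hUc, hUb, hDU⟩, hfr, hDvol⟩ := hD
  have hDclosed : IsClosed D := hDU ▸ isClosed_closure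
  have hDmeas : MeasurableSet D := hDclosed.measurableSet
  have hDbd : Bornology.IsBounded D := hDU ▸ hUb.closure
  haveI : IsFiniteMeasure lD := ⟨by
    rw [hlD, Measure.restrict_apply_univ, hDvol]; exact ENNReal.one_lt_top⟩
  -- absolute continuity of the image measure
  have hμac : Measure.map y lD ≪ volume := by
    refine Measure.AbsolutelyContinuous.mk fun s hs h0 => ?_
    rw [Measure.map_apply hy hs, hlD, Measure.restrict_apply (hy hs)]
    exact hynd s h0
  have hacys : Measure.map ys lD ≪ volume := by rw [hysr]; exact hμac
  obtain ⟨G, hGm, hGinv⟩ := exists_inverse hDvol hysm hysC hacys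
  have hDne : D.Nonempty := by
    rcases eq_empty_or_nonempty D with h | h
    · exfalso; rw [h] at hDvol; simp at hDvol
    · exact h
  obtain ⟨x₀, hx₀⟩ := hDne
  set X := fun a => if G (y a) ∈ D then G (y a) else x₀ with hX
  have hXm : Measurable X := by
    refine Measurable.ite ((hGm.comp hy) hDmeas) (hGm.comp hy) measurable_const
  -- the sets where the conjugate-gradient inverts `ys`
  have hB1meas : MeasurableSet {b : EuclideanSpace ℝ (Fin d) | ys (G b) = b} :=
    measurableSet_eq_fun (hysm.comp hGm) measurable_id
  have hB2meas : MeasurableSet {b : EuclideanSpace ℝ (Fin d) | G b ∈ D} := hGm hDmeas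
  have haeD : ∀ᵐ a ∂lD, a ∈ D := ae_restrict_mem hDmeas
  have hmapys1 : Measure.map ys lD {b | ys (G b) = b}ᶜ = 0 := by
    rw [Measure.map_apply hysm hB1meas.compl]
    refine measure_mono_null (fun a ha => ?_) (ae_iff.1 hGinv)
    simp only [mem_preimage, mem_compl_iff, mem_setOf_eq] at ha ⊢
    intro h; exact ha (by rw [h])
  have hmapys2 : Measure.map ys lD {b | G b ∈ D}ᶜ = 0 := by
    rw [Measure.map_apply hysm hB2meas.compl]
    have h0 : lD {a | ¬ (G (ys a) = a ∧ a ∈ D)} = 0 := by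
      have := hGinv.and haeD
      exact ae_iff.1 this
    refine measure_mono_null (fun a ha => ?_) h0
    simp only [mem_preimage, mem_compl_iff, mem_setOf_eq] at ha ⊢
    intro h; exact ha (h.1.symm ▸ h.2)
  have hY1 : ∀ᵐ a ∂lD, ys (G (y a)) = y a := by
    have h1 : lD (y ⁻¹' {b | ys (G b) = b}ᶜ) = 0 := by
      rw [← Measure.map_apply hy hB1meas.compl, ← hysr]; exact hmapys1
    rw [ae_iff]
    refine measure_mono_null (fun a ha => ?_) h1
    simpa using ha
  have hY2 : ∀ᵐ a ∂lD, G (y a) ∈ D := by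
    have h1 : lD (y ⁻¹' {b | G b ∈ D}ᶜ) = 0 := by
      rw [← Measure.map_apply hy hB2meas.compl, ← hysr]; exact hmapys2
    rw [ae_iff]
    refine measure_mono_null (fun a ha => ?_) h1
    simpa using ha
  have hXeq : X =ᵐ[lD] fun a => G (y a) := by
    filter_upwards [hY2] with a ha
    rw [hX]; simp only [ha, if_true]
  have hyYX : ∀ᵐ a ∂lD, y a = ys (X a) := by
    filter_upwards [hXeq, hY1] with a h1 h2
    rw [h1]; exact h2.symm
  have hmapX : Measure.map X lD = lD := by
    calc Measure.map X lD = Measure.map (fun a => G (y a)) lD := Measure.map_congr hXeq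
    _ = Measure.map G (Measure.map y lD) := (Measure.map_map hGm hy).symm
    _ = Measure.map G (Measure.map ys lD) := by rw [hysr]
    _ = Measure.map (fun a => G (ys a)) lD := Measure.map_map hGm hysm
    _ = Measure.map (fun a => a) lD := Measure.map_congr hGinv
    _ = lD := Measure.map_id
  have hXmaps : MapsTo X D D := by
    intro a _
    rw [hX]
    by_cases h : G (y a) ∈ D
    · simpa [h] using h
    · simpa [h] using hx₀
  -- integrability
  have hyInt : Integrable y lD := hyL2.integrable one_le_two
  have hysInt : Integrable ys lD := by
    have h1 : Integrable id (Measure.map y lD) := by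
      rw [integrable_map_measure aestronglyMeasurable_id hy.aemeasurable]
      exact hyInt
    rw [← hysr, integrable_map_measure aestronglyMeasurable_id hysm.aemeasurable] at h1
    exact h1
  refine ⟨ys, X, hysm, hysC, ⟨hXm, hXmaps, hmapX⟩, hyYX, EventuallyEq.rfl, ?_⟩
  rintro Y' X' hY'm hY'C ⟨hX'm, hX'maps, hX'map⟩ hfact
  have hmapY' : Measure.map Y' lD = Measure.map ys lD := by
    calc Measure.map Y' lD = Measure.map Y' (Measure.map X' lD) := by rw [hX'map]
    _ = Measure.map (fun a => Y' (X' a)) lD := Measure.map_map hY'm hX'm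
    _ = Measure.map y lD := Measure.map_congr (hfact.mono fun a ha => ha.symm)
    _ = Measure.map ys lD := hysr.symm
  have hysY' : ys =ᵐ[lD] Y' :=
    rearrangement_unique hDvol hDbd hDmeas hysm hY'm hysC hY'C hmapY'.symm hysInt
  refine ⟨hysY'.symm, ?_⟩
  -- `X' = X` a.e.
  have hNmeas : MeasurableSet {α : EuclideanSpace ℝ (Fin d) | Y' α = ys α} :=
    measurableSet_eq_fun hY'm hysm
  have h1 : ∀ᵐ a ∂lD, Y' (X' a) = ys (X' a) := by
    have h0 : lD {α | Y' α = ys α}ᶜ = 0 := by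
      have h00 := ae_iff.1 hysY'.symm
      rw [compl_setOf]
      simpa using h00
    have h2 : lD (X' ⁻¹' {α | Y' α = ys α}ᶜ) = 0 := by
      rw [← Measure.map_apply hX'm hNmeas.compl, hX'map]; exact h0
    rw [ae_iff]
    refine measure_mono_null (fun a ha => ?_) h2
    simpa using ha
  have hyX' : ∀ᵐ a ∂lD, y a = ys (X' a) := by
    filter_upwards [hfact, h1] with a ha hb
    rw [ha]; exact hb
  have hGsetmeas : MeasurableSet ({α : EuclideanSpace ℝ (Fin d) | G (ys α) = α} ∩ D) :=
    (measurableSet_eq_fun (hGm.comp hysm) measurable_id).inter hDmeas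
  have h2 : ∀ᵐ a ∂lD, G (ys (X' a)) = X' a := by
    have h0 : lD ({α | G (ys α) = α} ∩ D)ᶜ = 0 := by
      have hand := hGinv.and haeD
      have := ae_iff.1 hand
      refine measure_mono_null (fun α hα => ?_) this
      simp only [compl_inter, mem_union, mem_compl_iff, mem_setOf_eq] at hα ⊢
      rcases hα with h | h
      · exact fun hc => h hc.1
      · exact fun hc => h hc.2
    have h2' : lD (X' ⁻¹' ({α | G (ys α) = α} ∩ D)ᶜ) = 0 := by
      rw [← Measure.map_apply hX'm hGsetmeas.compl, hX'map]; exact h0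
    rw [ae_iff]
    refine measure_mono_null (fun a ha => ?_) h2'
    simp only [mem_setOf_eq] at ha
    simp only [mem_preimage, mem_compl_iff, mem_inter_iff, mem_setOf_eq]
    intro hc; exact ha hc.1
  filter_upwards [h2, hyX', hXeq] with a hGys hya hXa
  calc X' a = G (ys (X' a)) := hGys.symm
  _ = G (y a) := by rw [← hya]
  _ = X a := hXa.symm
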